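/- Let L ≥ 1 be a natural number, Q an L×L real matrix, y₀ ∈ ℝ^L a row vector, γ : ℝ → ℝ continuous, and t ≥ 0. Suppose y : ℝ → ℝ^L satisfies y(0) = y₀ and is differentiable at every s ∈ [0,t] with derivative y'(s) = −γ(s)·(y₀·exp(sQ)) + y(s)·Q. Then y(t) = (1 − ∫₀ᵗ γ(s) ds)·(y₀·exp(tQ)). -/

import Mathlib

open Matrix intervalIntegral

section Aux

attribute [local instance] Matrix.linftyOpNormedRing Matrix.linftyOpNormedAlgebra

variable {L : ℕ}

/-- The linear map sending a row vector to the matrix all of whose rows equal it. -/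
noncomputable def rowsCLM (L : ℕ) : (Fin L → ℝ) →L[ℝ] Matrix (Fin L) (Fin L) ℝ :=
  LinearMap.toContinuousLinearMap
    { toFun := fun v => Matrix.of fun _ j => v j
      map_add' := fun _ _ => rfl
      map_smul' := fun _ _ => rfl }

lemma rowsCLM_apply (v : Fin L → ℝ) (i j : Fin L) : rowsCLM L v i j = v j := rfl

lemma rowsCLM_vecMul (v : Fin L → ℝ) (M : Matrix (Fin L) (Fin L) ℝ) :
    rowsCLM L (v ᵥ* M) = rowsCLM L v * M := by
  ext i j
  simp [rowsCLM_apply, Matrix.mul_apply, Matrix.vecMul, dotProduct]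

end Aux

/-- **Duhamel formula** (key step in the proof of (3.5) in Theorem 3.1):
if `y(0) = y₀` and `y'(s) = -γ(s)·(y₀ · e^{sQ}) + y(s)·Q` on `[0,t]`, then
`y(t) = (1 - ∫₀ᵗ γ(s) ds)·(y₀ · e^{tQ})`. -/
theorem duhamel_row_vector_ode
    (L : ℕ) (hL : 1 ≤ L) (Q : Matrix (Fin L) (Fin L) ℝ)
    (y₀ : Fin L → ℝ) (γ : ℝ → ℝ) (hγ : Continuous γ)
    (t : ℝ) (ht : 0 ≤ t)
    (y : ℝ → Fin L → ℝ) (hy0 : y 0 = y₀)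
    (hy : ∀ s ∈ Set.Icc (0:ℝ) t,
      HasDerivAt y (-γ s • (y₀ ᵥ* NormedSpace.exp (s • Q)) + (y s) ᵥ* Q) s) :
    y t = (1 - ∫ s in (0:ℝ)..t, γ s) • (y₀ ᵥ* NormedSpace.exp (t • Q)) := by
  open scoped Norms.Operator in
  have hEQ : ∀ s : ℝ,
      NormedSpace.exp (s • (-Q)) * NormedSpace.exp (s • Q) = 1 := by
    intro s
    rw [← Matrix.exp_add_of_commute _ _ (by simp [Commute, SemiconjBy])]
    rw [smul_neg, neg_add_cancel, NormedSpace.exp_zero]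
  have hEQ' : ∀ s : ℝ,
      NormedSpace.exp (s • Q) * NormedSpace.exp (s • (-Q)) = 1 := by
    intro s
    rw [← Matrix.exp_add_of_commute _ _ (by simp [Commute, SemiconjBy])]
    rw [smul_neg, add_neg_cancel, NormedSpace.exp_zero]
  have hQE : ∀ s : ℝ,
      Q * NormedSpace.exp (s • (-Q)) = NormedSpace.exp (s • (-Q)) * Q := by
    intro s
    exact (Commute.exp_right (((Commute.refl Q).neg_right).smul_right s)).eq
  -- the function G s = R (y s) * exp(-sQ) has derivative -γ s • R y₀
  have hGd : ∀ s ∈ Set.Icc (0:ℝ) t,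
      HasDerivAt (fun u => rowsCLM L (y u) * NormedSpace.exp (u • (-Q)))
        (-γ s • rowsCLM L y₀) s := by
    intro s hs
    have hEd : HasDerivAt (fun u : ℝ => NormedSpace.exp (u • (-Q)))
        (NormedSpace.exp (s • (-Q)) * (-Q)) s := hasDerivAt_exp_smul_const (-Q) s
    have hyd : HasDerivAt (fun u => rowsCLM L (y u))
        (rowsCLM L (-γ s • (y₀ ᵥ* NormedSpace.exp (s • Q)) + (y s) ᵥ* Q)) s :=
      ((rowsCLM L).hasFDerivAt.comp_hasDerivAt s (hy s hs))
    have hmul := hyd.mul hEd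
    convert hmul using 1
    · rfl
    · rfl
    · rfl
    · rfl
    rw [map_add, (rowsCLM L).map_smul, rowsCLM_vecMul, rowsCLM_vecMul]
    rw [add_mul, smul_mul_assoc, Matrix.mul_assoc, hEQ' s, Matrix.mul_one]
    rw [Matrix.mul_assoc (rowsCLM L (y s)) Q, hQE s]
    simp only [mul_neg, ← Matrix.mul_assoc]
    abel
  -- FTC
  letI : ENormedAddMonoid (Matrix (Fin L) (Fin L) ℝ) := NormedAddCommGroup.toENormedAddCommMonoid.toENormedAddMonoid
  have hint : IntervalIntegrable (fun s => -γ s • rowsCLM L y₀)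
      MeasureTheory.volume 0 t :=
    (Continuous.smul hγ.neg continuous_const).intervalIntegrable 0 t
  have key : (∫ s in (0:ℝ)..t, -γ s • rowsCLM L y₀)
      = rowsCLM L (y t) * NormedSpace.exp (t • (-Q))
        - rowsCLM L (y 0) * NormedSpace.exp ((0:ℝ) • (-Q)) := by
    apply intervalIntegral.integral_eq_sub_of_hasDerivAt
    · intro s hs
      rw [Set.uIcc_of_le ht] at hs
      exact hGd s hs
    · exact hint
  have hint2 : (∫ s in (0:ℝ)..t, -γ s • rowsCLM L y₀)
      = (-∫ s in (0:ℝ)..t, γ s) • rowsCLM L y₀ := by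
    rw [intervalIntegral.integral_smul_const, intervalIntegral.integral_neg]
  have hG0 : rowsCLM L (y 0) * NormedSpace.exp ((0:ℝ) • (-Q)) = rowsCLM L y₀ := by
    rw [hy0, zero_smul, NormedSpace.exp_zero, Matrix.mul_one]
  have hGt : rowsCLM L (y t) * NormedSpace.exp (t • (-Q))
      = (1 - ∫ s in (0:ℝ)..t, γ s) • rowsCLM L y₀ := by
    have h2 := key.symm.trans hint2
    rw [hG0] at h2
    have h3 := sub_eq_iff_eq_add.mp h2
    rw [h3]
    module
  -- recover y t
  have hyt : rowsCLM L (y t)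
      = (1 - ∫ s in (0:ℝ)..t, γ s) • rowsCLM L (y₀ ᵥ* NormedSpace.exp (t • Q)) := by
    have h1 : rowsCLM L (y t)
        = (rowsCLM L (y t) * NormedSpace.exp (t • (-Q))) * NormedSpace.exp (t • Q) := by
      rw [Matrix.mul_assoc, hEQ t, Matrix.mul_one]
    rw [h1, hGt, smul_mul_assoc, rowsCLM_vecMul]
  funext j
  have := congrFun (congrFun hyt ⟨0, hL⟩) j
  simpa [rowsCLM_apply] using this
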